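/- For self-avoiding walk on the complete graph: with χ_N(z) := Σ_{m=0}^{N−1} z^m · Π_{j=1}^{m} (N − j) (the susceptibility, i.e. the generating function of the numbers of m-step self-avoiding walks from a fixed vertex of the complete graph on N vertices), for every s ∈ ℝ one has lim_{N→∞} (2N)^{−1/2} · χ_N( N^{−1}(1 − s(2N)^{−1/2}) ) = f_0(s), where f_0(s) = ∫₀^∞ x e^{−x⁴/4 − s x²/2} dx. -/

import Mathlib

open MeasureTheory

/-- `I k s = ∫₀^∞ x^k e^{-x⁴/4 - s x²/2} dx`; `f_0(s) = I 1 s` is the `n = 0`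
universal profile. -/
noncomputable def I (k s : ℝ) : ℝ :=
  ∫ x in Set.Ioi (0 : ℝ), x ^ k * Real.exp (-x ^ 4 / 4 - s * x ^ 2 / 2)

/-- The susceptibility of self-avoiding walk on the complete graph on `N` vertices:
`χ_N(z) = Σ_{m=0}^{N-1} z^m Π_{j=1}^m (N - j)`. -/
noncomputable def chi (N : ℕ) (z : ℝ) : ℝ :=
  ∑ m ∈ Finset.range N, z ^ m * ∏ j ∈ Finset.Icc 1 m, ((N : ℝ) - (j : ℝ))

open Set Filter Real

noncomputable def g (s : ℝ) (N m : ℕ) : ℝ :=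
  if m < N then (1 - s / Real.sqrt (2*N))^m * ∏ j ∈ Finset.Icc 1 m, (1 - (j:ℝ)/N) else 0

noncomputable def F (s : ℝ) (N : ℕ) (u : ℝ) : ℝ := g s N ⌊u * Real.sqrt (2*N)⌋₊

lemma log_one_add_le {x : ℝ} (hx : -1 < x) : Real.log (1 + x) ≤ x := by
  have := Real.log_le_sub_one_of_pos (x := 1 + x) (by linarith)
  linarith

lemma log_one_add_ge {x : ℝ} (hx : -(1/2 : ℝ) ≤ x) : x - 2 * x ^ 2 ≤ Real.log (1 + x) := by
  have hpos : (0:ℝ) < 1 + x := by linarith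
  have h1 : Real.log (1 + x)⁻¹ ≤ (1 + x)⁻¹ - 1 :=
    Real.log_le_sub_one_of_pos (by positivity)
  rw [Real.log_inv] at h1
  have h2 : x / (1 + x) ≤ Real.log (1 + x) := by
    have : (1 + x)⁻¹ - 1 = -(x / (1+x)) := by field_simp; ring
    linarith [h1.trans_eq this]
  have h3 : x - 2 * x ^ 2 ≤ x / (1 + x) := by
    rw [div_eq_mul_inv, ← sub_nonneg]
    have : x * (1+x)⁻¹ - (x - 2*x^2) = (x^2 * (1 + 2*x)) * (1+x)⁻¹ := by
      field_simp; ring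
    rw [this]
    have h12 : (0:ℝ) ≤ 1 + 2*x := by linarith
    positivity
  linarith

lemma integrable_gauss_lin (a : ℝ) : Integrable (fun u : ℝ => Real.exp (a * u - u ^ 2 / 2)) := by
  have h : Integrable (fun u : ℝ => Real.exp (a^2/2) * Real.exp (-(1/2 : ℝ) * (u - a)^2)) :=
    (((integrable_exp_neg_mul_sq (by norm_num : (0:ℝ) < 1/2)).comp_sub_right a)).const_mul _
  refine h.congr (Eventually.of_forall fun u => ?_)
  simp only [← Real.exp_add]
  congr 1
  ring

lemma integrable_target (s : ℝ) : Integrable (fun u : ℝ => Real.exp (-u^2 - s*u)) := by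
  have h : Integrable (fun u : ℝ => Real.exp (s^2/4) * Real.exp (-(1:ℝ) * (u + s/2)^2)) :=
    (((integrable_exp_neg_mul_sq (by norm_num : (0:ℝ) < 1)).comp_add_right (s/2))).const_mul _
  refine h.congr (Eventually.of_forall fun u => ?_)
  simp only [← Real.exp_add]
  congr 1
  ring

lemma I_one_eq (s : ℝ) : I 1 s = ∫ u in Set.Ioi (0:ℝ), Real.exp (-u^2 - s*u) := by
  have key :
      (∫ x in Set.Ioi (0:ℝ), ((fun u => Real.exp (-u^2 - s*u)) ∘ (fun x => x^2/2)) x * x)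
        = ∫ u in Set.Ioi ((fun x : ℝ => x^2/2) 0), Real.exp (-u^2 - s*u) := by
    apply MeasureTheory.integral_comp_mul_deriv_Ioi
    · exact (continuous_pow 2).continuousOn.div_const 2
    · have : Filter.Tendsto (fun x : ℝ => x^2) atTop atTop :=
        tendsto_pow_atTop (by norm_num)
      exact this.atTop_div_const (by norm_num)
    · intro x hx
      have : HasDerivAt (fun x : ℝ => x^2/2) x x := by
        simpa using (hasDerivAt_pow 2 x).div_const 2
      exact this.hasDerivWithinAt
    · exact (Real.continuous_exp.comp (by continuity)).continuousOn
    · exact (integrable_target s).integrableOn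
    · -- IntegrableOn (fun x => exp(...) * x) (Ici 0)
      have hint : IntegrableOn (fun x : ℝ => x ^ (1:ℝ) * Real.exp (-1 * x^2)) (Set.Ioi 0) :=
        integrableOn_rpow_mul_exp_neg_mul_sq (by norm_num) (by norm_num)
      rw [integrableOn_Ici_iff_integrableOn_Ioi]
      refine (hint.const_mul (Real.exp ((1 - s/2)^2))).mono' ?_ ?_
      · refine ContinuousOn.aestronglyMeasurable ?_ measurableSet_Ioi
        exact ((Real.continuous_exp.comp (by continuity)).mul continuous_id).continuousOn
      · refine (ae_restrict_mem measurableSet_Ioi).mono fun x hx => ?_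
        have hx0 : (0:ℝ) < x := hx
        have h1 : -(x^2/2)^2 - s*(x^2/2) ≤ (1 - s/2)^2 + (-1 * x^2) := by
          nlinarith [sq_nonneg (x^2/2 - (1 - s/2)), sq_nonneg x]
        have : ‖((fun u => Real.exp (-u^2 - s*u)) ∘ (fun x => x^2/2)) x * x‖
            = Real.exp (-(x^2/2)^2 - s*(x^2/2)) * x := by
          simp [Function.comp, abs_of_nonneg hx0.le, abs_of_pos hx0]
        rw [this, Real.rpow_one]
        calc Real.exp (-(x^2/2)^2 - s*(x^2/2)) * x
            ≤ Real.exp ((1 - s/2)^2 + (-1 * x^2)) * x := by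
              exact mul_le_mul_of_nonneg_right (Real.exp_le_exp.2 h1) hx0.le
          _ = Real.exp ((1-s/2)^2) * (x * Real.exp (-1 * x^2)) := by
              rw [Real.exp_add]; ring
  rw [I]
  rw [show ((fun x : ℝ => x^2/2) 0) = 0 by norm_num] at key
  rw [← key]
  refine setIntegral_congr_fun measurableSet_Ioi fun x hx => ?_
  simp only [Function.comp]
  rw [Real.rpow_one, mul_comm]
  congr 1
  ring

lemma sum_Icc_cast (m : ℕ) : (∑ j ∈ Finset.Icc 1 m, (j:ℝ)) = m*(m+1)/2 := by
  induction m with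
  | zero => simp
  | succ m ih =>
    rw [Finset.sum_Icc_succ_top (by omega), ih]
    push_cast; ring

lemma tendsto_c : Tendsto (fun N : ℕ => Real.sqrt (2*N)) atTop atTop := by
  have h2N : Tendsto (fun N : ℕ => (2*N : ℝ)) atTop atTop :=
    (tendsto_natCast_atTop_atTop).const_mul_atTop (by norm_num)
  have := (tendsto_rpow_atTop (by norm_num : (0:ℝ) < 1/2)).comp h2N
  refine this.congr fun N => ?_
  rw [Function.comp, ← Real.sqrt_eq_rpow]

lemma chi_eq (s : ℝ) {N : ℕ} (hN : 1 ≤ N) :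
    chi N ((N : ℝ)⁻¹ * (1 - s / Real.sqrt (2 * N))) = ∑ m ∈ Finset.range N, g s N m := by
  have hN0 : (0:ℝ) < N := by exact_mod_cast hN
  refine Finset.sum_congr rfl fun m hm => ?_
  rw [Finset.mem_range] at hm
  rw [g, if_pos hm, mul_pow]
  rw [mul_comm ((N:ℝ)⁻¹ ^ m) _, mul_assoc]
  congr 1
  rw [show ((N:ℝ)⁻¹) ^ m = ∏ _j ∈ Finset.Icc 1 m, (N:ℝ)⁻¹ by
    rw [Finset.prod_const, Nat.card_Icc]; norm_num]
  rw [← Finset.prod_mul_distrib]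
  refine Finset.prod_congr rfl fun j hj => ?_
  field_simp

lemma integral_F (s : ℝ) {N : ℕ} (hN : 1 ≤ N) :
    ∫ u in Set.Ioi (0:ℝ), F s N u = (∑ m ∈ Finset.range N, g s N m) / Real.sqrt (2*N) := by
  set c := Real.sqrt (2*N) with hc_def
  have hc : 0 < c := Real.sqrt_pos.2 (by positivity)
  -- F is constant g s N m on Ico (m/c) ((m+1)/c)
  have hfloor : ∀ m : ℕ, ∀ u ∈ Set.Ico ((m:ℝ)/c) (((m:ℝ)+1)/c), F s N u = g s N m := by
    intro m u hu
    have h1 : (m:ℝ) ≤ u * c := by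
      rw [← div_le_iff₀ hc] at *; exact hu.1
    have h2 : u * c < (m:ℝ) + 1 := by
      rw [← lt_div_iff₀ hc] at *; exact hu.2
    have h0 : (0:ℝ) ≤ u * c := le_trans (by positivity) h1
    rw [F]
    congr 1
    rw [Nat.floor_eq_iff h0]
    exact ⟨h1, by push_cast; exact h2⟩
  have hpiece_int : ∀ m : ℕ, IntegrableOn (F s N) (Set.Ico ((m:ℝ)/c) (((m:ℝ)+1)/c)) := by
    intro m
    exact (integrableOn_const measure_Ico_lt_top.ne).congr_fun
      (fun u hu => (hfloor m u hu).symm) measurableSet_Ico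
  have hpiece : ∀ m : ℕ, (∫ u in Set.Ico ((m:ℝ)/c) (((m:ℝ)+1)/c), F s N u) = g s N m / c := by
    intro m
    rw [setIntegral_congr_fun measurableSet_Ico (hfloor m), setIntegral_const, measureReal_def,
      Real.volume_Ico, ENNReal.toReal_ofReal (by rw [div_sub_div_same, add_sub_cancel_left]; positivity)]
    rw [div_sub_div_same, smul_eq_mul]
    norm_num
    ring
  have main : ∀ K : ℕ, IntegrableOn (F s N) (Set.Ico (0:ℝ) ((K:ℝ)/c)) ∧
      (∫ u in Set.Ico (0:ℝ) ((K:ℝ)/c), F s N u) = ∑ m ∈ Finset.range K, g s N m / c := by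
    intro K
    induction K with
    | zero => simp
    | succ K ih =>
      have hsplit : Set.Ico (0:ℝ) ((K:ℝ)/c) ∪ Set.Ico ((K:ℝ)/c) (((K:ℝ)+1)/c)
          = Set.Ico (0:ℝ) (((K:ℝ)+1)/c) := by
        apply Set.Ico_union_Ico_eq_Ico (by positivity)
        gcongr
        linarith
      have hdisj : Disjoint (Set.Ico (0:ℝ) ((K:ℝ)/c)) (Set.Ico ((K:ℝ)/c) (((K:ℝ)+1)/c)) :=
        Set.Ico_disjoint_Ico_same
      have hcast : ((K+1 : ℕ) : ℝ) = (K:ℝ) + 1 := by push_cast; ring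
      constructor
      · rw [hcast, ← hsplit]
        exact ih.1.union (hpiece_int K)
      · rw [hcast, ← hsplit,
          setIntegral_union hdisj measurableSet_Ico ih.1 (hpiece_int K),
          ih.2, hpiece K, Finset.sum_range_succ]
  have htail0 : ∀ u ∈ Set.Ici ((N:ℝ)/c), F s N u = 0 := by
    intro u hu
    have : (N:ℝ) ≤ u * c := by rw [← div_le_iff₀ hc]; exact hu
    have hge : N ≤ ⌊u * c⌋₊ := Nat.le_floor this
    have hge' : N ≤ ⌊u * Real.sqrt (2*(N:ℝ))⌋₊ := hge
    rw [F, g, if_neg (not_lt.2 hge')]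
  have htail_int : IntegrableOn (F s N) (Set.Ici ((N:ℝ)/c)) :=
    (integrableOn_zero).congr_fun (fun u hu => (htail0 u hu).symm) measurableSet_Ici
  have htail : (∫ u in Set.Ici ((N:ℝ)/c), F s N u) = 0 := by
    rw [setIntegral_congr_fun measurableSet_Ici htail0]; simp
  have hsplit2 : Set.Ico (0:ℝ) ((N:ℝ)/c) ∪ Set.Ici ((N:ℝ)/c) = Set.Ici (0:ℝ) :=
    Set.Ico_union_Ici_eq_Ici (by positivity)
  have hdisj2 : Disjoint (Set.Ico (0:ℝ) ((N:ℝ)/c)) (Set.Ici ((N:ℝ)/c)) := by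
    rw [Set.disjoint_left]
    rintro u ⟨_, h2⟩ h3
    exact absurd h3 (not_le.2 h2)
  rw [← integral_Ici_eq_integral_Ioi, ← hsplit2,
    setIntegral_union hdisj2 measurableSet_Ici (main N).1 htail_int, (main N).2, htail,
    add_zero, ← Finset.sum_div]

lemma F_tendsto (s : ℝ) {u : ℝ} (hu : 0 < u) :
    Tendsto (fun N => F s N u) atTop (nhds (Real.exp (-u^2 - s*u))) := by
  set c : ℕ → ℝ := fun N => Real.sqrt (2*N) with hc_def
  set m : ℕ → ℕ := fun N => ⌊u * c N⌋₊ with hm_def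
  have hc : Tendsto c atTop atTop := tendsto_c
  have hcpos : ∀ᶠ N in atTop, 0 < c N := hc.eventually_gt_atTop 0
  have hcinv : Tendsto (fun N => (c N)⁻¹) atTop (nhds 0) := hc.inv_tendsto_atTop
  -- m N / c N → u
  have hmc : Tendsto (fun N => (m N : ℝ) / c N) atTop (nhds u) := by
    apply tendsto_of_tendsto_of_tendsto_of_le_of_le'
        (g := fun N => u - (c N)⁻¹) (h := fun _ => u)
    · simpa using tendsto_const_nhds.sub hcinv
    · exact tendsto_const_nhds
    · filter_upwards [hcpos] with N hN
      have h1 : u * c N - 1 ≤ (m N : ℝ) := (Nat.sub_one_lt_floor _).le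
      calc u - (c N)⁻¹ = (u * c N - 1) / c N := by field_simp
        _ ≤ (m N : ℝ) / c N := by gcongr
    · filter_upwards [hcpos] with N hN
      rw [div_le_iff₀ hN]
      exact Nat.floor_le (by positivity)
  have hm1c : Tendsto (fun N => ((m N : ℝ) + 1) / c N) atTop (nhds u) := by
    have := hmc.add hcinv
    rw [add_zero] at this
    refine this.congr fun N => ?_
    rw [← one_div, ← add_div]
  -- c N * c N = 2 N
  have hc2 : ∀ N : ℕ, c N * c N = 2 * N := fun N => Real.mul_self_sqrt (by positivity)
  -- m N / N → 0
  have hmN : Tendsto (fun N => (m N : ℝ) / N) atTop (nhds 0) := by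
    have h := hmc.mul (hcinv.const_mul 2)
    rw [mul_zero, mul_zero] at h
    refine h.congr' ?_
    filter_upwards [hcpos, eventually_ge_atTop 1] with N hcN hN1
    have hN0 : (0:ℝ) < N := by exact_mod_cast hN1
    field_simp
    nlinarith [hc2 N, sq_nonneg (c N)]
  have ev_mhalf : ∀ᶠ N in atTop, (m N : ℝ) / N ≤ 1/2 :=
    hmN.eventually_le_const (by norm_num)
  have ev_mlt : ∀ᶠ N in atTop, m N < N := by
    filter_upwards [hmN.eventually_lt_const one_pos, eventually_ge_atTop 1] with N h1 h2
    have hN0 : (0:ℝ) < N := by exact_mod_cast h2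
    rw [div_lt_one hN0] at h1
    exact_mod_cast h1
  have hsc : Tendsto (fun N => s / c N) atTop (nhds 0) := by
    have := hcinv.const_mul s
    rw [mul_zero] at this
    exact this.congr fun N => (div_eq_mul_inv s (c N)).symm
  have ev_pos : ∀ᶠ N in atTop, 0 < 1 - s / c N := by
    filter_upwards [hsc.eventually_lt_const one_pos] with N h; linarith
  have ev_shalf : ∀ᶠ N in atTop, |s / c N| ≤ 1/2 := by
    have habs : Tendsto (fun N => |s / c N|) atTop (nhds 0) := by
      simpa using hsc.abs
    exact habs.eventually_le_const (by norm_num)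
  set A : ℕ → ℝ := fun N => (m N : ℝ) * Real.log (1 - s / c N) with hA_def
  set B : ℕ → ℝ := fun N => ∑ j ∈ Finset.Icc 1 (m N), Real.log (1 - (j:ℝ)/N) with hB_def
  have hF_eq : (fun N => F s N u) =ᶠ[Filter.atTop] fun N => Real.exp (A N + B N) := by
    filter_upwards [ev_mlt, ev_pos, eventually_ge_atTop 1] with N hmlt hpos hN1
    have : F s N u = g s N (m N) := rfl
    rw [this, g, if_pos hmlt, Real.exp_add]
    congr 1
    · conv_lhs => rw [← Real.exp_log hpos]
      rw [← Real.exp_nat_mul]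
    · rw [Real.exp_sum]
      refine Finset.prod_congr rfl fun j hj => ?_
      rw [Finset.mem_Icc] at hj
      have hjN : (j : ℝ) < N := by exact_mod_cast lt_of_le_of_lt hj.2 hmlt
      have hN0 : (0:ℝ) < N := by exact_mod_cast hN1
      rw [Real.exp_log (by rw [sub_pos, div_lt_one hN0]; exact hjN)]
  have hA : Tendsto A atTop (nhds (-(s*u))) := by
    apply tendsto_of_tendsto_of_tendsto_of_le_of_le'
        (g := fun N => (-s) * ((m N : ℝ)/c N) - (2*s^2) * (((m N : ℝ)/c N) * (c N)⁻¹))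
        (h := fun N => (-s) * ((m N : ℝ)/c N))
    · have h1 := (hmc.const_mul (-s)).sub (((hmc.mul hcinv)).const_mul (2*s^2))
      rw [mul_zero, mul_zero, sub_zero] at h1
      convert h1 using 2
      ring
    · have h1 := hmc.const_mul (-s)
      rwa [show -s*u = -(s*u) by ring] at h1
    · filter_upwards [hcpos, ev_shalf] with N hcN hsh
      have hx : -(1/2 : ℝ) ≤ -(s / c N) := by
        rw [abs_le] at hsh; linarith [hsh.1, hsh.2]
      have hlog := log_one_add_ge hx
      rw [show (1 : ℝ) + -(s / c N) = 1 - s / c N by ring] at hlog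
      have := mul_le_mul_of_nonneg_left hlog (by positivity : (0:ℝ) ≤ (m N : ℝ))
      calc (-s) * ((m N : ℝ)/c N) - (2*s^2) * (((m N : ℝ)/c N) * (c N)⁻¹)
          = (m N : ℝ) * (-(s / c N) - 2 * (-(s / c N))^2) := by field_simp
        _ ≤ (m N : ℝ) * Real.log (1 - s / c N) := this
    · filter_upwards [hcpos, ev_shalf] with N hcN hsh
      have hx : (-1 : ℝ) < -(s / c N) := by
        rw [abs_le] at hsh; linarith [hsh.1, hsh.2]
      have hlog := log_one_add_le hx
      rw [show (1 : ℝ) + -(s / c N) = 1 - s / c N by ring] at hlog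
      have := mul_le_mul_of_nonneg_left hlog (by positivity : (0:ℝ) ≤ (m N : ℝ))
      calc A N ≤ (m N : ℝ) * -(s / c N) := this
        _ = (-s) * ((m N : ℝ)/c N) := by ring
  have hB : Tendsto B atTop (nhds (-(u*u))) := by
    apply tendsto_of_tendsto_of_tendsto_of_le_of_le'
        (g := fun N => -((1 + 2*((m N : ℝ)/N)) * (((m N : ℝ)/c N) * (((m N : ℝ)+1)/c N))))
        (h := fun N => -(((m N : ℝ)/c N) * (((m N : ℝ)+1)/c N)))
    · have h1 := ((hmN.const_mul 2).const_add 1).mul (hmc.mul hm1c)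
      rw [mul_zero, add_zero] at h1
      have h2 := h1.neg
      rw [show -(1 * (u * u)) = -(u*u) by ring] at h2
      exact h2
    · exact (hmc.mul hm1c).neg
    · -- lower bound for B
      filter_upwards [hcpos, ev_mhalf, eventually_ge_atTop 1, ev_mlt] with N hcN hmh hN1 hmlt
      have hN0 : (0:ℝ) < N := by exact_mod_cast hN1
      have hterm : ∀ j ∈ Finset.Icc 1 (m N),
          -((j:ℝ)/N) * (1 + 2*((m N : ℝ)/N)) ≤ Real.log (1 - (j:ℝ)/N) := by
        intro j hj
        rw [Finset.mem_Icc] at hj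
        have hjm : (j : ℝ) ≤ (m N : ℝ) := by exact_mod_cast hj.2
        have hjN : (j : ℝ)/N ≤ 1/2 := le_trans (by gcongr) hmh
        have hx : -(1/2 : ℝ) ≤ -((j:ℝ)/N) := by linarith
        have hlog := log_one_add_ge hx
        rw [show (1 : ℝ) + -((j:ℝ)/N) = 1 - (j:ℝ)/N by ring] at hlog
        refine le_trans ?_ hlog
        have hj2 : ((j:ℝ)/N)^2 ≤ ((j:ℝ)/N) * ((m N : ℝ)/N) := by
          rw [sq]
          exact mul_le_mul_of_nonneg_left (by gcongr) (by positivity)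
        nlinarith [hj2]
      have hsum := Finset.sum_le_sum hterm
      refine le_trans (le_of_eq ?_) hsum
      have key : ((m N:ℝ)/c N) * (((m N:ℝ)+1)/c N) = ((m N:ℝ)*((m N:ℝ)+1))/(2*(N:ℝ)) := by
        rw [div_mul_div_comm, hc2 N]
      rw [key, ← Finset.sum_mul]
      have : (∑ i ∈ Finset.Icc 1 (m N), -((i:ℝ) / N)) = -(((m N:ℝ)*((m N:ℝ)+1)/2)/N) := by
        rw [Finset.sum_neg_distrib, ← Finset.sum_div, sum_Icc_cast]
      rw [this]
      field_simp
    · -- upper bound for B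
      filter_upwards [hcpos, eventually_ge_atTop 1, ev_mlt] with N hcN hN1 hmlt
      have hN0 : (0:ℝ) < N := by exact_mod_cast hN1
      have hterm : ∀ j ∈ Finset.Icc 1 (m N),
          Real.log (1 - (j:ℝ)/N) ≤ -((j:ℝ)/N) := by
        intro j hj
        rw [Finset.mem_Icc] at hj
        have hjN : (j : ℝ) < N := by exact_mod_cast lt_of_le_of_lt hj.2 hmlt
        have hx : (-1 : ℝ) < -((j:ℝ)/N) := by
          rw [neg_lt_neg_iff, div_lt_one hN0]
          exact hjN
        have hlog := log_one_add_le hx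
        rw [show (1 : ℝ) + -((j:ℝ)/N) = 1 - (j:ℝ)/N by ring] at hlog
        exact hlog
      have hsum := Finset.sum_le_sum hterm
      refine le_trans hsum (le_of_eq ?_)
      have key : ((m N:ℝ)/c N) * (((m N:ℝ)+1)/c N) = ((m N:ℝ)*((m N:ℝ)+1))/(2*(N:ℝ)) := by
        rw [div_mul_div_comm, hc2 N]
      have : (∑ i ∈ Finset.Icc 1 (m N), -((i:ℝ) / N)) = -(((m N:ℝ)*((m N:ℝ)+1)/2)/N) := by
        rw [Finset.sum_neg_distrib, ← Finset.sum_div, sum_Icc_cast]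
      rw [key, this]
      field_simp
  have hexp : Tendsto (fun N => Real.exp (A N + B N)) atTop
      (nhds (Real.exp (-(s*u) + -(u*u)))) :=
    (Real.continuous_exp.tendsto _).comp (hA.add hB)
  rw [show -(s*u) + -(u*u) = -u^2 - s*u by ring] at hexp
  exact Filter.Tendsto.congr' hF_eq.symm hexp

lemma F_bound (s : ℝ) {N : ℕ} (hN2 : 2 ≤ N) {u : ℝ} (hu : 0 < u) :
    |F s N u| ≤ Real.exp (1/2 + |s| * u - u^2/2) := by
  set c : ℝ := Real.sqrt (2*N) with hc_def
  have hc2 : c * c = 2 * N := Real.mul_self_sqrt (by positivity)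
  have hc : 2 ≤ c := by
    have h4 : (4:ℝ) ≤ 2*N := by
      have : (2:ℝ) ≤ N := by exact_mod_cast hN2
      linarith
    calc (2:ℝ) = Real.sqrt 4 := by
          rw [show (4:ℝ) = 2^2 by norm_num, Real.sqrt_sq (by norm_num)]
      _ ≤ Real.sqrt (2*N) := Real.sqrt_le_sqrt h4
  have hc0 : 0 < c := by linarith
  set M : ℕ := ⌊u * c⌋₊ with hM_def
  by_cases hm : M < N
  · have hFu : F s N u = (1 - s/c)^M * ∏ j ∈ Finset.Icc 1 M, (1 - (j:ℝ)/N) := by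
      rw [F, g, if_pos hm]
    have hN0 : (0:ℝ) < N := by positivity
    have hprod_nonneg : (0:ℝ) ≤ ∏ j ∈ Finset.Icc 1 M, (1 - (j:ℝ)/N) := by
      apply Finset.prod_nonneg
      intro j hj
      rw [Finset.mem_Icc] at hj
      have : (j:ℝ) ≤ N := by exact_mod_cast le_of_lt (lt_of_le_of_lt hj.2 hm)
      rw [sub_nonneg, div_le_one hN0]
      exact this
    have hMc : (M:ℝ) ≤ u * c := Nat.floor_le (by positivity)
    have hMc2 : u * c - 1 ≤ (M:ℝ) := (Nat.sub_one_lt_floor _).le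
    -- factor 1
    have h1 : |(1 - s/c)^M| ≤ Real.exp (|s| * u) := by
      rw [abs_pow]
      have ha : |1 - s/c| ≤ Real.exp (|s|/c) := by
        calc |1 - s/c| ≤ 1 + |s|/c := by
              rw [sub_eq_add_neg]
              refine (abs_add_le _ _).trans ?_
              simp [abs_div, abs_of_pos hc0]
          _ ≤ Real.exp (|s|/c) := by
              have := Real.add_one_le_exp (|s|/c)
              linarith
      calc |1 - s/c|^M ≤ (Real.exp (|s|/c))^M :=
            pow_le_pow_left₀ (abs_nonneg _) ha M
        _ = Real.exp ((M:ℝ) * (|s|/c)) := by rw [← Real.exp_nat_mul]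
        _ ≤ Real.exp (|s| * u) := by
            apply Real.exp_le_exp.2
            have hMu : (M:ℝ)/c ≤ u := by rw [div_le_iff₀ hc0]; linarith
            calc (M:ℝ) * (|s|/c) = |s| * ((M:ℝ)/c) := by ring
              _ ≤ |s| * u := by
                  apply mul_le_mul_of_nonneg_left hMu (abs_nonneg s)
    -- factor 2
    have h2 : (∏ j ∈ Finset.Icc 1 M, (1 - (j:ℝ)/N)) ≤ Real.exp (1/2 - u^2/2) := by
      have step : (∏ j ∈ Finset.Icc 1 M, (1 - (j:ℝ)/N))
          ≤ ∏ j ∈ Finset.Icc 1 M, Real.exp (-((j:ℝ)/N)) := by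
        apply Finset.prod_le_prod
        · intro j hj
          rw [Finset.mem_Icc] at hj
          have : (j:ℝ) ≤ N := by exact_mod_cast le_of_lt (lt_of_le_of_lt hj.2 hm)
          rw [sub_nonneg, div_le_one hN0]
          exact this
        · intro j hj
          have := Real.add_one_le_exp (-((j:ℝ)/N))
          linarith
      rw [← Real.exp_sum] at step
      refine step.trans (Real.exp_le_exp.2 ?_)
      rw [Finset.sum_neg_distrib, ← Finset.sum_div, sum_Icc_cast]
      -- -(M(M+1)/2)/N ≤ 1/2 - u²/2
      set t : ℝ := (M:ℝ)/c with ht_def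
      have ht0 : 0 ≤ t := by positivity
      have ht1 : u - 1/2 ≤ t := by
        rw [ht_def, le_div_iff₀ hc0]
        nlinarith
      have htt : t * t = (M:ℝ)*(M:ℝ)/(2*N) := by
        rw [ht_def, div_mul_div_comm, hc2]
      have key : u^2/2 - 1/2 ≤ (M:ℝ)*((M:ℝ)+1)/(2*N) := by
        have hMM : (M:ℝ)*(M:ℝ)/(2*N) ≤ (M:ℝ)*((M:ℝ)+1)/(2*N) := by gcongr <;> nlinarith
        nlinarith [sq_nonneg (u - 1), sq_nonneg (t - u + 1/2)]
      have : -(((M:ℝ)*((M:ℝ)+1)/2)/N) = -((M:ℝ)*((M:ℝ)+1)/(2*N)) := by ring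
      rw [this]
      linarith
    calc |F s N u| = |(1 - s/c)^M| * (∏ j ∈ Finset.Icc 1 M, (1 - (j:ℝ)/N)) := by
          rw [hFu, abs_mul, abs_of_nonneg hprod_nonneg]
      _ ≤ Real.exp (|s| * u) * Real.exp (1/2 - u^2/2) := by
          apply mul_le_mul h1 h2 hprod_nonneg (Real.exp_nonneg _)
      _ = Real.exp (1/2 + |s| * u - u^2/2) := by
          rw [← Real.exp_add, show |s| * u + (1/2 - u^2/2) = 1/2 + |s| * u - u^2/2 from by ring]
  · rw [F, g, if_neg hm]
    rw [abs_zero]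
    positivity

/-- In the scaling window `z = N⁻¹(1 - s(2N)^{-1/2})`, the susceptibility of
self-avoiding walk on the complete graph satisfies `(2N)^{-1/2} χ_N(z) → f_0(s)`. -/
theorem complete_graph_saw_window_profile (s : ℝ) :
    Filter.Tendsto
      (fun N : ℕ => chi N ((N : ℝ)⁻¹ * (1 - s / Real.sqrt (2 * N))) / Real.sqrt (2 * N))
      Filter.atTop (nhds (I 1 s)) := by
  rw [I_one_eq s]
  have hmain : Tendsto (fun N : ℕ => ∫ u in Set.Ioi (0:ℝ), F s N u) atTop
      (nhds (∫ u in Set.Ioi (0:ℝ), Real.exp (-u^2 - s*u))) := by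
    apply MeasureTheory.tendsto_integral_filter_of_dominated_convergence
      (bound := fun u => Real.exp (1/2 + |s| * u - u^2/2))
    · apply Eventually.of_forall
      intro N
      apply Measurable.aestronglyMeasurable
      exact measurable_from_nat.comp (Nat.measurable_floor.comp (measurable_id.mul_const _))
    · filter_upwards [eventually_ge_atTop 2] with N hN2
      refine (ae_restrict_mem measurableSet_Ioi).mono fun u hu => ?_
      rw [Real.norm_eq_abs]
      exact F_bound s hN2 hu
    · have : Integrable (fun u : ℝ => Real.exp (1/2) * Real.exp (|s| * u - u^2/2)) :=
        (integrable_gauss_lin |s|).const_mul _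
      refine (this.congr (Eventually.of_forall fun u => ?_)).integrableOn
      simp only [← Real.exp_add]
      congr 1
      ring
    · refine (ae_restrict_mem measurableSet_Ioi).mono fun u hu => ?_
      exact F_tendsto s hu
  refine hmain.congr' ?_
  filter_upwards [eventually_ge_atTop 1] with N hN1
  rw [integral_F s hN1, chi_eq s hN1]
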